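/- arXiv:1504.08294 — 3 statements merged into one kernel-verified Lean document; each statement's English description precedes it below -/
import Mathlib

section
/- Let k be a field of characteristic 0 and X a type. Let ι : FreeLieAlgebra k X → FreeAlgebra k X be the unique Lie algebra morphism into the free associative algebra (regarded as a Lie algebra via the commutator bracket) sending each generator of the free Lie algebra to the corresponding generator of the free algebra. Let S be a set of elements of FreeLieAlgebra k X, let r be the Lie ideal generated by S, and let g = (FreeLieAlgebra k X)/r. Then the universal enveloping algebra U(g) is isomorphic, as a k-algebra, to the quotient of FreeAlgebra k X by the two-sided ideal generated by the image ι(S). -/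
noncomputable section

attribute [local instance 100] LieRing.ofAssociativeRing

/-- The unique Lie algebra morphism from the free Lie algebra on `X` into the free
associative algebra on `X` (regarded as a Lie algebra via the commutator bracket),
sending each generator to the corresponding generator. -/
def freeLieToFreeAlgebra (k : Type*) [CommRing k] (X : Type*) :
    FreeLieAlgebra k X →ₗ⁅k⁆ FreeAlgebra k X :=
  FreeLieAlgebra.lift k (FreeAlgebra.ι k)

section Aux

variable (k : Type*) [Field k] [CharZero k] (X : Type*) (S : Set (FreeLieAlgebra k X))

local notation "I" => LieSubmodule.lieSpan k (FreeLieAlgebra k X) S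
local notation "g" => FreeLieAlgebra k X ⧸ LieSubmodule.lieSpan k (FreeLieAlgebra k X) S

/-- The natural quotient map as a Lie algebra morphism. -/
def quotMkLieHom : FreeLieAlgebra k X →ₗ⁅k⁆ g :=
  { (LieSubmodule.lieSpan k (FreeLieAlgebra k X) S).toSubmodule.mkQ with
    map_lie' := fun {x y} => rfl }

theorem quotMkLieHom_surjective : Function.Surjective (quotMkLieHom k X S) :=
  Quot.mk_surjective

/-- Composing an algebra morphism out of the free algebra with `freeLieToFreeAlgebra`
is the lift of the values on the generators. -/
theorem algHom_comp_freeLieToFreeAlgebra {B : Type*} [Ring B] [Algebra k B]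
    (A : FreeAlgebra k X →ₐ[k] B) :
    A.toLieHom.comp (freeLieToFreeAlgebra k X) =
      FreeLieAlgebra.lift k (fun x => A (FreeAlgebra.ι k x)) := by
  apply FreeLieAlgebra.hom_ext
  intro x
  simp [freeLieToFreeAlgebra, FreeLieAlgebra.lift_of_apply]

end Aux

/-- Let `k` be a field of characteristic 0, `X` a type, `ι` the canonical
Lie algebra morphism `FreeLieAlgebra k X → FreeAlgebra k X`, `S` a set of elements of the
free Lie algebra, `r` the Lie ideal generated by `S` and `g` the corresponding quotient
Lie algebra.  Then the universal enveloping algebra `U(g)` is isomorphic, as a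
`k`-algebra, to the quotient of `FreeAlgebra k X` by the two-sided ideal generated by the
image `ι(S)` (realised as the `RingQuot` of the relations `ι s = 0`, `s ∈ S`). -/
theorem stmt1 (k : Type*) [Field k] [CharZero k] (X : Type*)
    (S : Set (FreeLieAlgebra k X)) :
    Nonempty
      (UniversalEnvelopingAlgebra k
          (FreeLieAlgebra k X ⧸ LieSubmodule.lieSpan k (FreeLieAlgebra k X) S) ≃ₐ[k]
        RingQuot (fun a b : FreeAlgebra k X =>
          (∃ s ∈ S, a = freeLieToFreeAlgebra k X s) ∧ b = 0)) := by
  set I := LieSubmodule.lieSpan k (FreeLieAlgebra k X) S with hI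
  set rel : FreeAlgebra k X → FreeAlgebra k X → Prop :=
    fun a b => (∃ s ∈ S, a = freeLieToFreeAlgebra k X s) ∧ b = 0 with hrel
  set π := quotMkLieHom k X S with hπ
  -- the Lie hom FreeLie → RingQuot
  set φ : FreeLieAlgebra k X →ₗ⁅k⁆ RingQuot rel :=
    (RingQuot.mkAlgHom k rel).toLieHom.comp (freeLieToFreeAlgebra k X) with hφ
  have hφS : ∀ s ∈ S, φ s = 0 := by
    intro s hs
    have := RingQuot.mkAlgHom_rel k
      (show rel (freeLieToFreeAlgebra k X s) 0 from ⟨⟨s, hs, rfl⟩, rfl⟩)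
    simp at this
    exact this
  have hφI : ∀ a ∈ I, φ a = 0 := by
    intro a ha
    have hle : I ≤ φ.ker := by
      rw [hI]
      apply LieSubmodule.lieSpan_le.mpr
      intro s hs
      exact LieHom.mem_ker.mpr (hφS s hs)
    exact LieHom.mem_ker.mp (hle ha)
  -- descend φ to the quotient Lie algebra
  have hker : I.toSubmodule ≤ LinearMap.ker φ.toLinearMap := fun a ha => hφI a ha
  set ψ : (FreeLieAlgebra k X ⧸ I) →ₗ⁅k⁆ RingQuot rel :=
    { I.toSubmodule.liftQ φ.toLinearMap hker with
      map_lie' := by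
        rintro ⟨x⟩ ⟨y⟩
        exact φ.map_lie x y } with hψ
  have hψπ : ∀ a, ψ (π a) = φ a := fun a => rfl
  -- forward algebra morphism
  set F : UniversalEnvelopingAlgebra k (FreeLieAlgebra k X ⧸ I) →ₐ[k] RingQuot rel :=
    UniversalEnvelopingAlgebra.lift k ψ with hF
  -- backward algebra morphism
  set f0 : FreeAlgebra k X →ₐ[k] UniversalEnvelopingAlgebra k (FreeLieAlgebra k X ⧸ I) :=
    FreeAlgebra.lift k
      (fun x => UniversalEnvelopingAlgebra.ι k (π (FreeLieAlgebra.of k x))) with hf0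
  have hf0comp : f0.toLieHom.comp (freeLieToFreeAlgebra k X) =
      (UniversalEnvelopingAlgebra.ι k).comp π := by
    rw [algHom_comp_freeLieToFreeAlgebra]
    apply FreeLieAlgebra.hom_ext
    intro x
    rw [FreeLieAlgebra.lift_of_apply, LieHom.comp_apply, hf0, FreeAlgebra.lift_ι_apply]
  have hf0ι : ∀ a : FreeLieAlgebra k X, f0 (freeLieToFreeAlgebra k X a) =
      UniversalEnvelopingAlgebra.ι k (π a) := fun a =>
    LieHom.congr_fun hf0comp a
  have hw : ∀ ⦃a b : FreeAlgebra k X⦄, rel a b → f0 a = f0 b := by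
    rintro a b ⟨⟨s, hs, rfl⟩, rfl⟩
    rw [hf0ι]
    have : π s = 0 := by
      simp only [hπ]
      exact (LieSubmodule.Quotient.mk_eq_zero' (N := I)).mpr
        (LieSubmodule.subset_lieSpan hs)
    rw [this]
    simp
  set G : RingQuot rel →ₐ[k] UniversalEnvelopingAlgebra k (FreeLieAlgebra k X ⧸ I) :=
    RingQuot.liftAlgHom k ⟨f0, hw⟩ with hG
  have hGmk : ∀ a, G (RingQuot.mkAlgHom k rel a) = f0 a := fun a =>
    RingQuot.liftAlgHom_mkAlgHom_apply k f0 hw a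
  -- G ∘ F = id
  have hGF : G.comp F = AlgHom.id k _ := by
    apply UniversalEnvelopingAlgebra.hom_ext
    apply LieHom.ext
    intro y
    obtain ⟨a, rfl⟩ := quotMkLieHom_surjective k X S y
    have h1 : F (UniversalEnvelopingAlgebra.ι k (π a)) = φ a := by
      rw [hF]
      rw [UniversalEnvelopingAlgebra.lift_ι_apply]
      exact hψπ a
    simp only [LieHom.coe_comp, Function.comp_apply, AlgHom.coe_toLieHom,
      AlgHom.coe_comp, AlgHom.coe_id, id_eq]
    rw [h1, hφ]
    simp only [LieHom.coe_comp, Function.comp_apply, AlgHom.coe_toLieHom]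
    rw [hGmk, hf0ι]
  -- F ∘ G = id
  have hFG : F.comp G = AlgHom.id k _ := by
    apply RingQuot.ringQuot_ext'
    apply FreeAlgebra.hom_ext
    funext x
    simp only [AlgHom.comp_apply, AlgHom.coe_id, id_eq, Function.comp_apply]
    rw [hGmk, hf0]
    rw [FreeAlgebra.lift_ι_apply]
    rw [hF, UniversalEnvelopingAlgebra.lift_ι_apply]
    rw [hψπ, hφ]
    simp only [LieHom.coe_comp, Function.comp_apply, AlgHom.coe_toLieHom]
    congr 1
    simp [freeLieToFreeAlgebra, FreeLieAlgebra.lift_of_apply]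
  exact ⟨AlgEquiv.ofAlgHom F G hFG hGF⟩
end
end

section
/- Let G be a group with a central filtration {F_k}_{k≥1}, let H be a normal subgroup of G, and let π : G → Q = G/H be the quotient map; set F̄_k = π(F_k) for each k. Then {F̄_k}_{k≥1} is a central filtration on Q; the subgroup F_{k+1}·(F_k ∩ H) is normal in F_k; and for every k ≥ 1, π induces an isomorphism of (abelian) groups F_k/(F_{k+1}·(F_k ∩ H)) ≅ F̄_k/F̄_{k+1}. (This is the degree-k component of Lazard's natural isomorphism gr^F(G)/gr^{F̃}(H) ≅ gr^{F̄}(G/H), where F̃_k H = F_k ∩ H is the induced filtration on H.) -/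
open scoped commutatorElement

/-- **Lazard.** Let `G` be a group with a central filtration `F` (so
`F 1 = G`, `F` is decreasing, and `[F r, F s] ≤ F (r+s)`), let `H` be a normal subgroup
of `G`, let `π : G → Q = G/H` be the quotient map, and set `F̄ k = π(F k)`.  Then:
(1) `F̄` is a central filtration on `Q`;
(2) for every `k ≥ 1`, the subgroup `F (k+1) ⊔ (F k ⊓ H)` (the product
    `F_{k+1}·(F_k ∩ H)`) is a normal subgroup of `F k`;
(3) for every `k ≥ 1`, `π` induces an isomorphism
    `F k/(F (k+1)·(F k ∩ H)) ≅ F̄ k/F̄ (k+1)`, expressed elementwise: the map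
    `F k → F̄ k/F̄ (k+1)` induced by `π` is surjective with kernel
    `F (k+1) ⊔ (F k ⊓ H)`. -/
theorem stmt4 (G : Type*) [Group G] (F : ℕ → Subgroup G)
    (hF1 : F 1 = ⊤) (hFdec : ∀ r, 1 ≤ r → F (r + 1) ≤ F r)
    (hFcomm : ∀ r s, 1 ≤ r → 1 ≤ s → ⁅F r, F s⁆ ≤ F (r + s))
    (H : Subgroup G) [H.Normal] :
    -- (1) the image filtration is a central filtration on `Q = G/H`:
    ((F 1).map (QuotientGroup.mk' H) = ⊤ ∧
      (∀ r, 1 ≤ r →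
        (F (r + 1)).map (QuotientGroup.mk' H) ≤ (F r).map (QuotientGroup.mk' H)) ∧
      (∀ r s, 1 ≤ r → 1 ≤ s →
        ⁅(F r).map (QuotientGroup.mk' H), (F s).map (QuotientGroup.mk' H)⁆ ≤
          (F (r + s)).map (QuotientGroup.mk' H))) ∧
    -- (2) `F (k+1) · (F k ∩ H)` is normal in `F k`:
    (∀ r, 1 ≤ r → ((F (r + 1) ⊔ (F r ⊓ H)).subgroupOf (F r)).Normal) ∧
    -- (3) `π` induces an isomorphism `F k/(F (k+1)·(F k ∩ H)) ≅ F̄ k/F̄ (k+1)`: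
    (∀ r, 1 ≤ r →
      (∀ y ∈ (F r).map (QuotientGroup.mk' H), ∃ x ∈ F r, QuotientGroup.mk' H x = y) ∧
      (∀ x ∈ F r,
        (QuotientGroup.mk' H x ∈ (F (r + 1)).map (QuotientGroup.mk' H) ↔
          x ∈ F (r + 1) ⊔ (F r ⊓ H)))) := by
  -- antitone on [1, ∞)
  have hanti : ∀ a b, 1 ≤ a → a ≤ b → F b ≤ F a := by
    intro a b ha hab
    induction b with
    | zero => omega
    | succ n ih =>
      rcases Nat.lt_or_ge a (n + 1) with h | h
      · exact le_trans (hFdec n (by omega)) (ih (by omega))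
      · have : a = n + 1 := by omega
        subst this; exact le_rfl
  -- conjugation stability
  have hconj : ∀ r, 1 ≤ r → ∀ g ∈ F r, ∀ x ∈ F (r + 1) ⊔ (F r ⊓ H),
      g * x * g⁻¹ ∈ F (r + 1) ⊔ (F r ⊓ H) := by
    intro r hr g hg x hx
    have key : F (r + 1) ⊔ (F r ⊓ H) ≤
        (F (r + 1) ⊔ (F r ⊓ H)).comap (MulAut.conj g).toMonoidHom := by
      refine sup_le (fun y hy => ?_) (fun y hy => ?_) <;>
        simp only [Subgroup.mem_comap, MulEquiv.coe_toMonoidHom, MulAut.conj_apply]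
      · have h1 : ⁅g, y⁆ ∈ F (r + (r + 1)) :=
          hFcomm r (r + 1) hr (by omega) (Subgroup.commutator_mem_commutator hg hy)
        have h1' : ⁅g, y⁆ ∈ F (r + 1) := hanti (r + 1) (r + (r + 1)) (by omega) (by omega) h1
        have h2 : g * y * g⁻¹ = ⁅g, y⁆ * y := by
          simp only [commutatorElement_def]; group
        rw [h2]
        exact Subgroup.mem_sup_left (mul_mem h1' hy)
      · refine Subgroup.mem_sup_right ⟨?_, ?_⟩
        · have h1 : ⁅g, y⁆ ∈ F (r + r) :=
            hFcomm r r hr hr (Subgroup.commutator_mem_commutator hg hy.1)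
          have h1' : ⁅g, y⁆ ∈ F r := hanti r (r + r) hr (by omega) h1
          have h2 : g * y * g⁻¹ = ⁅g, y⁆ * y := by
            simp only [commutatorElement_def]; group
          rw [h2]
          exact mul_mem h1' hy.1
        · exact Subgroup.Normal.conj_mem ‹H.Normal› y hy.2 g
    have h3 := key hx
    simpa using h3
  refine ⟨⟨?_, ?_, ?_⟩, ?_, ?_⟩
  · rw [hF1, Subgroup.map_top_of_surjective _ (QuotientGroup.mk'_surjective H)]
  · intro r hr
    exact Subgroup.map_mono (hFdec r hr)
  · intro r s hr hs
    rw [← Subgroup.map_commutator]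
    exact Subgroup.map_mono (hFcomm r s hr hs)
  · intro r hr
    constructor
    intro n hn g
    rw [Subgroup.mem_subgroupOf] at hn ⊢
    exact hconj r hr g g.2 n hn
  · intro r hr
    refine ⟨?_, ?_⟩
    · intro y hy
      obtain ⟨x, hx, rfl⟩ := hy
      exact ⟨x, hx, rfl⟩
    · intro x hx
      constructor
      · rintro ⟨y, hy, hyx⟩
        have hmem : y⁻¹ * x ∈ H := by
          have h1 : y⁻¹ * x ∈ (QuotientGroup.mk' H).ker := by
            rw [MonoidHom.mem_ker, map_mul, map_inv, hyx]
            simp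
          rwa [QuotientGroup.ker_mk'] at h1
        have hyF : y ∈ F r := hFdec r hr hy
        have : x = y * (y⁻¹ * x) := by group
        rw [this]
        exact mul_mem (Subgroup.mem_sup_left hy)
          (Subgroup.mem_sup_right ⟨mul_mem ((F r).inv_mem hyF) hx, hmem⟩)
      · intro hx'
        have hle : (F (r + 1) ⊔ (F r ⊓ H)).map (QuotientGroup.mk' H) ≤
            (F (r + 1)).map (QuotientGroup.mk' H) := by
          rw [Subgroup.map_sup]
          refine sup_le le_rfl ?_
          rintro y ⟨z, hz, rfl⟩
          have : QuotientGroup.mk' H z = 1 := by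
            simpa [QuotientGroup.eq_one_iff] using hz.2
          rw [this]; exact one_mem _
        exact hle ⟨x, hx', rfl⟩
end

section
/- Let G be a group, H a normal subgroup of G, and Q a subgroup of G with H ∩ Q = {1} and HQ = G (so G is the internal semidirect product H ⋊ Q). Suppose Q acts trivially on the abelianization of H, i.e., for all q ∈ Q and h ∈ H the commutator qhq⁻¹h⁻¹ lies in [H, H]. Then for every r ≥ 1: (i) Γ_r G ∩ H = Γ_r H (the lower central series filtration of G induces the lower central series of H); and (ii) the inclusion H ≤ G and the projection G → Q induce a short exact sequence of abelian groups 0 → Γ_r H/Γ_{r+1} H → Γ_r G/Γ_{r+1} G → Γ_r Q/Γ_{r+1} Q → 0, which is split by the map induced by the inclusion Q ≤ G. -/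
namespace FRaux

open Subgroup Pointwise
open scoped commutatorElement

variable {G : Type*} [Group G]

/-- General three subgroups lemma, modulo a normal subgroup `D`. -/
theorem three_subgroups {A B C D : Subgroup G} [D.Normal]
    (h1 : ⁅⁅A, B⁆, C⁆ ≤ D) (h2 : ⁅⁅B, C⁆, A⁆ ≤ D) : ⁅⁅C, A⁆, B⁆ ≤ D := by
  let π := QuotientGroup.mk' D
  have key : ∀ X Y Z : Subgroup G,
      ⁅⁅X, Y⁆, Z⁆ ≤ D ↔ ⁅⁅X.map π, Y.map π⁆, Z.map π⁆ = ⊥ := by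
    intro X Y Z
    rw [← Subgroup.map_commutator, ← Subgroup.map_commutator, Subgroup.map_eq_bot_iff,
      QuotientGroup.ker_mk']
  rw [key] at h1 h2 ⊢
  exact Subgroup.commutator_commutator_eq_bot_of_rotate h1 h2

theorem lcs_succ_eq (i : ℕ) :
    (⊤ : Subgroup G).lowerCentralSeries (i + 1) = ⁅(⊤ : Subgroup G).lowerCentralSeries i, (⊤ : Subgroup G)⁆ := rfl

theorem lcs_comm : ∀ (j i : ℕ),
    ⁅(⊤ : Subgroup G).lowerCentralSeries i, (⊤ : Subgroup G).lowerCentralSeries j⁆ ≤ (⊤ : Subgroup G).lowerCentralSeries (i + j + 1) := by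
  intro j
  induction j with
  | zero => intro i; exact le_of_eq (lcs_succ_eq i).symm
  | succ j ih =>
    intro i
    rw [lcs_succ_eq j, Subgroup.commutator_comm]
    apply three_subgroups
    · -- ⁅⁅⊤, Γ i⁆, Γ j⁆ ≤ Γ (i + (j+1) + 1)
      rw [Subgroup.commutator_comm (⊤ : Subgroup G) ((⊤ : Subgroup G).lowerCentralSeries i), ← lcs_succ_eq i]
      have := ih (i + 1)
      have e : i + 1 + j + 1 = i + (j + 1) + 1 := by omega
      rwa [e] at this
    · -- ⁅⁅Γ i, Γ j⁆, ⊤⁆ ≤ Γ (i + (j+1) + 1)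
      calc ⁅⁅(⊤ : Subgroup G).lowerCentralSeries i, (⊤ : Subgroup G).lowerCentralSeries j⁆, (⊤ : Subgroup G)⁆
          ≤ ⁅(⊤ : Subgroup G).lowerCentralSeries (i + j + 1), (⊤ : Subgroup G)⁆ :=
            Subgroup.commutator_mono (ih i) le_rfl
        _ = (⊤ : Subgroup G).lowerCentralSeries (i + j + 1 + 1) := (lcs_succ_eq _).symm
        _ ≤ (⊤ : Subgroup G).lowerCentralSeries (i + (j + 1) + 1) := le_of_eq (by ring_nf)

/-- The image in `G` of the lower central series of a subgroup. -/
def L (H : Subgroup G) (n : ℕ) : Subgroup G := ((⊤ : Subgroup H).lowerCentralSeries n).map H.subtype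

theorem L_zero (H : Subgroup G) : L H 0 = H := by
  simp [L, ← MonoidHom.range_eq_map, Subgroup.subtype_range]

theorem L_succ (H : Subgroup G) (n : ℕ) : L H (n + 1) = ⁅L H n, H⁆ := by
  rw [L, L, lcs_succ_eq, Subgroup.map_commutator, ← MonoidHom.range_eq_map,
    Subgroup.subtype_range]

theorem L_le (H : Subgroup G) (n : ℕ) : L H n ≤ H :=
  (Subgroup.map_subtype_le _)

theorem L_antitone (H : Subgroup G) {m n : ℕ} (h : m ≤ n) : L H n ≤ L H m :=
  Subgroup.map_mono ((⊤ : Subgroup H).lowerCentralSeries_antitone h)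

theorem L_le_lcs (H : Subgroup G) (n : ℕ) : L H n ≤ (⊤ : Subgroup G).lowerCentralSeries n :=
  Subgroup.lowerCentralSeries_map_subtype_le H n

theorem L_normal (H : Subgroup G) [H.Normal] (n : ℕ) : (L H n).Normal := by
  induction n with
  | zero => rw [L_zero]; infer_instance
  | succ n ih => rw [L_succ]; exact @Subgroup.commutator_normal _ _ (L H n) H ih _

theorem L_comm (H : Subgroup G) (i j : ℕ) : ⁅L H i, L H j⁆ ≤ L H (i + j + 1) := by
  rw [L, L, L, ← Subgroup.map_commutator]
  exact Subgroup.map_mono (lcs_comm j i)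

variable (H Q : Subgroup G) [H.Normal]
variable (htriv : ∀ q ∈ Q, ∀ h ∈ H, q * h * q⁻¹ * h⁻¹ ∈ ⁅H, H⁆)

include htriv

theorem key0 : ⁅Q, H⁆ ≤ L H 1 := by
  rw [L_succ, L_zero]
  rw [Subgroup.commutator_le]
  intro q hq h hh
  exact htriv q hq h hh

theorem key1 : ∀ j : ℕ, ⁅Q, L H j⁆ ≤ L H (j + 1) := by
  intro j
  induction j with
  | zero => rw [L_zero]; exact key0 H Q htriv
  | succ j ih =>
    haveI := L_normal H (j + 2)
    rw [L_succ H j, Subgroup.commutator_comm]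
    apply three_subgroups (A := H) (B := Q) (C := L H j)
    · -- ⁅⁅H, Q⁆, L H j⁆ ≤ L H (j + 2)
      calc ⁅⁅H, Q⁆, L H j⁆ ≤ ⁅L H 1, L H j⁆ := by
            apply Subgroup.commutator_mono _ le_rfl
            rw [Subgroup.commutator_comm]; exact key0 H Q htriv
        _ ≤ L H (1 + j + 1) := L_comm H 1 j
        _ = L H (j + 2) := by ring_nf
    · -- ⁅⁅Q, L H j⁆, H⁆ ≤ L H (j + 2)
      calc ⁅⁅Q, L H j⁆, H⁆ ≤ ⁅L H (j + 1), H⁆ := Subgroup.commutator_mono ih le_rfl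
        _ = L H (j + 2) := (L_succ H (j + 1)).symm

theorem key2 : ∀ (k j : ℕ), ⁅L Q k, L H j⁆ ≤ L H (j + k + 1) := by
  intro k
  induction k with
  | zero => intro j; rw [L_zero]; exact key1 H Q htriv j
  | succ k ih =>
    intro j
    haveI := L_normal H (j + (k + 1) + 1)
    rw [L_succ Q k]
    apply three_subgroups (A := Q) (B := L H j) (C := L Q k)
    · -- ⁅⁅Q, L H j⁆, L Q k⁆
      calc ⁅⁅Q, L H j⁆, L Q k⁆ ≤ ⁅L H (j + 1), L Q k⁆ :=
            Subgroup.commutator_mono (key1 H Q htriv j) le_rfl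
        _ = ⁅L Q k, L H (j + 1)⁆ := Subgroup.commutator_comm _ _
        _ ≤ L H (j + 1 + k + 1) := ih (j + 1)
        _ = L H (j + (k + 1) + 1) := by ring_nf
    · -- ⁅⁅L H j, L Q k⁆, Q⁆
      calc ⁅⁅L H j, L Q k⁆, Q⁆ ≤ ⁅L H (j + k + 1), Q⁆ := by
            apply Subgroup.commutator_mono _ le_rfl
            rw [Subgroup.commutator_comm]; exact ih j
        _ = ⁅Q, L H (j + k + 1)⁆ := Subgroup.commutator_comm _ _
        _ ≤ L H (j + k + 1 + 1) := key1 H Q htriv (j + k + 1)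
        _ = L H (j + (k + 1) + 1) := by ring_nf

variable (hsup : H ⊔ Q = ⊤)
include hsup

theorem main : ∀ n : ℕ, (⊤ : Subgroup G).lowerCentralSeries n = L H n ⊔ L Q n := by
  intro n
  induction n with
  | zero => rw [Subgroup.lowerCentralSeries_zero, L_zero, L_zero, hsup]
  | succ n ih =>
    haveI hLHn1 := L_normal H (n + 1)
    -- normality of the candidate subgroup
    have hTnormal : (L H (n + 1) ⊔ L Q (n + 1)).Normal := by
      constructor
      intro t ht g
      have ht' : t ∈ (L H (n + 1) : Set G) * (L Q (n + 1) : Set G) := by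
        rwa [← Subgroup.normal_mul]
      obtain ⟨a, ha, b, hb, rfl⟩ := ht'
      have hg : g ∈ (H : Set G) * (Q : Set G) := by
        rw [← Subgroup.normal_mul, hsup]; trivial
      obtain ⟨h, hh, q, hq, rfl⟩ := hg
      have hab : (h * q) * (a * b) * (h * q)⁻¹ =
          ((h * q) * a * (h * q)⁻¹) * ((h * q) * b * (h * q)⁻¹) := by group
      rw [hab]
      apply mul_mem
      · exact Subgroup.mem_sup_left (hLHn1.conj_mem a ha (h * q))
      · -- conjugate b ∈ L Q (n+1) by h * q
        obtain ⟨b', hb', rfl⟩ := hb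
        have hq' : q * (b' : G) * q⁻¹ ∈ L Q (n + 1) := by
          refine ⟨⟨q, hq⟩ * b' * ⟨q, hq⟩⁻¹, ?_, rfl⟩
          exact (Subgroup.lowerCentralSeries_normal ⊤ (n + 1)).conj_mem b' hb' ⟨q, hq⟩
        set b₂ := q * (b' : G) * q⁻¹ with hb₂
        have hsplit : (h * q) * (b' : G) * (h * q)⁻¹ = (h * b₂ * h⁻¹ * b₂⁻¹) * b₂ := by
          rw [hb₂]; group
        rw [Subgroup.coe_subtype, hsplit]
        apply mul_mem _ (Subgroup.mem_sup_right hq')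
        apply Subgroup.mem_sup_left
        have : h * b₂ * h⁻¹ * b₂⁻¹ ∈ ⁅H, L Q (n + 1)⁆ :=
          Subgroup.commutator_mem_commutator hh hq'
        refine (?_ : ⁅H, L Q (n + 1)⁆ ≤ L H (n + 1)) this
        rw [Subgroup.commutator_comm]
        have h0 := key2 H Q htriv (n + 1) 0
        rw [L_zero] at h0
        exact h0.trans (L_antitone H (by omega))
    refine le_antisymm ?_ ?_
    · -- Γ (n+1) G ≤ L H (n+1) ⊔ L Q (n+1)
      rw [lcs_succ_eq n, ih, Subgroup.commutator_le]
      intro x hx y _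
      have hx' : x ∈ (L H n : Set G) * (L Q n : Set G) := by
        haveI := L_normal H n
        rwa [← Subgroup.normal_mul]
      obtain ⟨a, ha, b, hb, rfl⟩ := hx'
      have hy : y ∈ (H : Set G) * (Q : Set G) := by
        rw [← Subgroup.normal_mul, hsup]; trivial
      obtain ⟨c, hc, d, hd, rfl⟩ := hy
      set T := L H (n + 1) ⊔ L Q (n + 1) with hT
      -- base commutators
      have hac : ⁅a, c⁆ ∈ T := Subgroup.mem_sup_left
        ((L_succ H n).symm ▸ Subgroup.commutator_mem_commutator ha hc)
      have had : ⁅a, d⁆ ∈ T := by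
        apply Subgroup.mem_sup_left
        refine (?_ : ⁅L H n, Q⁆ ≤ L H (n + 1)) (Subgroup.commutator_mem_commutator ha hd)
        rw [Subgroup.commutator_comm]; exact key1 H Q htriv n
      have hbc : ⁅b, c⁆ ∈ T := by
        apply Subgroup.mem_sup_left
        have : ⁅b, c⁆ ∈ ⁅L Q n, L H 0⁆ := by
          rw [L_zero]; exact Subgroup.commutator_mem_commutator hb hc
        refine (?_ : ⁅L Q n, L H 0⁆ ≤ L H (n + 1)) this
        calc ⁅L Q n, L H 0⁆ ≤ L H (0 + n + 1) := key2 H Q htriv n 0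
          _ = L H (n + 1) := by ring_nf
      have hbd : ⁅b, d⁆ ∈ T := Subgroup.mem_sup_right
        ((L_succ Q n).symm ▸ Subgroup.commutator_mem_commutator hb hd)
      -- assemble using commutator identities and normality of T
      have hacd : ⁅a, c * d⁆ ∈ T := by
        have e : ⁅a, c * d⁆ = ⁅a, c⁆ * (c * ⁅a, d⁆ * c⁻¹) := by group
        rw [e]; exact mul_mem hac (hTnormal.conj_mem _ had c)
      have hbcd : ⁅b, c * d⁆ ∈ T := by
        have e : ⁅b, c * d⁆ = ⁅b, c⁆ * (c * ⁅b, d⁆ * c⁻¹) := by group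
        rw [e]; exact mul_mem hbc (hTnormal.conj_mem _ hbd c)
      have e : ⁅a * b, c * d⁆ = (a * ⁅b, c * d⁆ * a⁻¹) * ⁅a, c * d⁆ := by group
      rw [e]; exact mul_mem (hTnormal.conj_mem _ hbcd a) hacd
    · refine sup_le ?_ ?_
      · exact L_le_lcs H (n + 1)
      · exact L_le_lcs Q (n + 1)

variable (hinf : H ⊓ Q = ⊥)
include hinf

theorem part_i (n : ℕ) : (⊤ : Subgroup G).lowerCentralSeries n ⊓ H = L H n := by
  refine le_antisymm ?_ (le_inf (L_le_lcs H n) (L_le H n))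
  intro x hx
  rw [Subgroup.mem_inf] at hx
  obtain ⟨hx1, hx2⟩ := hx
  rw [main H Q htriv hsup n] at hx1
  haveI := L_normal H n
  have hx' : x ∈ (L H n : Set G) * (L Q n : Set G) := by rwa [← Subgroup.normal_mul]
  obtain ⟨a, ha, b, hb, rfl⟩ := hx'
  have hbH : b ∈ H := by
    have haH : a ∈ H := L_le H n ha
    have : a⁻¹ * (a * b) ∈ H := mul_mem (inv_mem haH) hx2
    simpa using this
  have hbQ : b ∈ Q := L_le Q n hb
  have : b ∈ H ⊓ Q := ⟨hbH, hbQ⟩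
  rw [hinf] at this
  rw [Subgroup.mem_bot] at this
  simp only [this, mul_one]
  exact ha

end FRaux

open Pointwise

/-- **Falk–Randell.** Let `G` be a group, `H` a normal subgroup and `Q` a
subgroup with `H ⊓ Q = ⊥` and `H ⊔ Q = ⊤` (so `G = H ⋊ Q` internally), and let
`ρ : G → Q` be the projection (the retraction with `ρ ∘ incl = id` and `ker ρ = H`).
Suppose `Q` acts trivially on the abelianization of `H`, i.e. `q h q⁻¹ h⁻¹ ∈ [H, H]`
for all `q ∈ Q`, `h ∈ H`.  Then for every `n` (with `Γ_{n+1}` denoting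
`lowerCentralSeries · n`):
(i)  `Γ_{n+1} G ⊓ H = Γ_{n+1} H`; and
(ii) the inclusion `H ≤ G` and the projection `ρ` induce a short exact sequence
`0 → Γ_{n+1}H/Γ_{n+2}H → Γ_{n+1}G/Γ_{n+2}G → Γ_{n+1}Q/Γ_{n+2}Q → 0`
of abelian groups, split by the map induced by the inclusion `Q ≤ G`; this is expressed
elementwise below (well-definedness, injectivity, exactness in the middle, and the
splitting induced by the inclusion, which also yields surjectivity). -/
theorem stmt5 (G : Type*) [Group G] (H Q : Subgroup G) [H.Normal]
    (hinf : H ⊓ Q = ⊥) (hsup : H ⊔ Q = ⊤)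
    (htriv : ∀ q ∈ Q, ∀ h ∈ H, q * h * q⁻¹ * h⁻¹ ∈ ⁅H, H⁆)
    (ρ : G →* Q) (hρid : ∀ q : Q, ρ (q : G) = q) (hρker : ρ.ker = H) (n : ℕ) :
    -- (i) the LCS filtration of `G` induces the LCS of `H`:
    ((⊤ : Subgroup G).lowerCentralSeries n ⊓ H = ((⊤ : Subgroup H).lowerCentralSeries n).map H.subtype) ∧
    -- the maps of the sequence are well defined:
    (((⊤ : Subgroup H).lowerCentralSeries n).map H.subtype ≤ (⊤ : Subgroup G).lowerCentralSeries n) ∧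
    (∀ x ∈ (⊤ : Subgroup G).lowerCentralSeries n, ρ x ∈ (⊤ : Subgroup Q).lowerCentralSeries n) ∧
    -- (ii) injectivity of `gr_{n+1}(H) → gr_{n+1}(G)`:
    (∀ x ∈ ((⊤ : Subgroup H).lowerCentralSeries n).map H.subtype,
      x ∈ (⊤ : Subgroup G).lowerCentralSeries (n + 1) →
        x ∈ ((⊤ : Subgroup H).lowerCentralSeries (n + 1)).map H.subtype) ∧
    -- (ii) exactness at `gr_{n+1}(G)`:
    (∀ x ∈ (⊤ : Subgroup G).lowerCentralSeries n,
      (ρ x ∈ (⊤ : Subgroup Q).lowerCentralSeries (n + 1) ↔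
        ∃ h ∈ ((⊤ : Subgroup H).lowerCentralSeries n).map H.subtype,
          h⁻¹ * x ∈ (⊤ : Subgroup G).lowerCentralSeries (n + 1))) ∧
    -- (ii) the splitting induced by the inclusion `Q ≤ G` (in particular
    -- `gr_{n+1}(G) → gr_{n+1}(Q)` is a split surjection, since `ρ ∘ incl = id`):
    (∀ q : Q, q ∈ (⊤ : Subgroup Q).lowerCentralSeries n → (q : G) ∈ (⊤ : Subgroup G).lowerCentralSeries n) := by

  have pi : ∀ m : ℕ, (⊤ : Subgroup G).lowerCentralSeries m ⊓ H = ((⊤ : Subgroup H).lowerCentralSeries m).map H.subtype :=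
    fun m => FRaux.part_i H Q htriv hsup hinf m
  refine ⟨pi n, lowerCentralSeries_map_subtype_le H n, ?_, ?_, ?_, ?_⟩
  · intro x hx
    have := lowerCentralSeries.map ρ n (Subgroup.mem_map_of_mem ρ hx)
    exact this
  · intro x hx hx1
    have hxH : x ∈ H := FRaux.L_le H n hx
    rw [← pi (n + 1)]
    exact Subgroup.mem_inf.mpr ⟨hx1, hxH⟩
  · intro x hx
    constructor
    · intro hρx
      have hx' : x ∈ (FRaux.L H n : Set G) * (FRaux.L Q n : Set G) := by
        haveI := FRaux.L_normal H n
        rw [← Subgroup.normal_mul, ← FRaux.main H Q htriv hsup n]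
        exact hx
      obtain ⟨a, ha, b, hb, rfl⟩ := hx'
      obtain ⟨b', hb', rfl⟩ := hb
      refine ⟨a, ha, ?_⟩
      have e : a⁻¹ * (a * Q.subtype b') = Q.subtype b' := by group
      rw [e]
      have hρa : ρ a = 1 := by
        rw [← MonoidHom.mem_ker, hρker]; exact FRaux.L_le H n ha
      have e2 : ρ (a * Q.subtype b') = b' := by
        rw [map_mul, hρa, one_mul]; exact hρid b'
      rw [e2] at hρx
      exact lowerCentralSeries_map_subtype_le Q (n + 1)
        (Subgroup.mem_map_of_mem Q.subtype hρx)
    · rintro ⟨h, hh, hmem⟩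
      have hρh : ρ h = 1 := by
        rw [← MonoidHom.mem_ker, hρker]; exact FRaux.L_le H n hh
      have e : x = h * (h⁻¹ * x) := by group
      rw [e, map_mul, hρh, one_mul]
      exact lowerCentralSeries.map ρ (n + 1) (Subgroup.mem_map_of_mem ρ hmem)
  · intro q hq
    exact lowerCentralSeries_map_subtype_le Q n (Subgroup.mem_map_of_mem Q.subtype hq)
end
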